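/- Let ψ : E → ℝ be differentiable with L-Lipschitz gradient, and let x, y, u ∈ E and constants α, β ≥ 0, G ≥ 0 satisfy ‖y − x‖ ≤ α‖u‖, ‖y − x − u‖ ≤ β‖u‖², and ‖∇ψ(x)‖ ≤ G. Then ψ(y) ≤ ψ(x) + ⟪∇ψ(x), u⟫ + ((α²L + 2Gβ)/2)·‖u‖². -/

import Mathlib

open scoped RealInnerProductSpace

theorem descent_aux
    {E : Type*} [NormedAddCommGroup E] [InnerProductSpace ℝ E]
    (L : ℝ) (hL : 0 ≤ L) [CompleteSpace E] (ψ : E → ℝ) (ψ' : E → E)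
    (hgrad : ∀ x : E, HasGradientAt ψ (ψ' x) x)
    (hlip : ∀ x₁ x₂ : E, ‖ψ' x₁ - ψ' x₂‖ ≤ L * ‖x₁ - x₂‖)
    (x y : E) :
    ψ y ≤ ψ x + ⟪ψ' x, y - x⟫ + L / 2 * ‖y - x‖ ^ 2 := by
  set v := y - x with hv
  set φ : ℝ → ℝ := fun t => ψ (x + t • v)
  have hφ : ∀ t : ℝ, HasDerivAt φ ⟪ψ' (x + t • v), v⟫ t := by
    intro t
    have hc : HasDerivAt (fun t : ℝ => x + t • v) v t := by
      simpa using ((hasDerivAt_id t).smul_const v).const_add x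
    have := ((hgrad (x + t • v)).hasFDerivAt.comp_hasDerivAt t hc)
    simp at this
    exact this
  set h : ℝ → ℝ := fun t => φ t - t * ⟪ψ' x, v⟫ - t ^ 2 * (L * ‖v‖ ^ 2 / 2)
  have hh : ∀ t : ℝ, HasDerivAt h
      (⟪ψ' (x + t • v), v⟫ - ⟪ψ' x, v⟫ - 2 * t * (L * ‖v‖ ^ 2 / 2)) t := by
    intro t
    have h1 := (hφ t).sub ((hasDerivAt_id t).const_mul ⟪ψ' x, v⟫)
    have h2 : HasDerivAt (fun t : ℝ => t ^ 2 * (L * ‖v‖ ^ 2 / 2))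
        (2 * t * (L * ‖v‖ ^ 2 / 2)) t := by
      simpa [mul_comm] using (hasDerivAt_pow 2 t).mul_const (L * ‖v‖ ^ 2 / 2)
    have := h1.sub h2
    simp [mul_comm] at this ⊢
    exact this
  have hanti : AntitoneOn h (Set.Icc 0 1) := by
    apply antitoneOn_of_deriv_nonpos (convex_Icc 0 1)
    · exact Continuous.continuousOn (by
        have : Continuous h := by
          have : Differentiable ℝ h := fun t => (hh t).differentiableAt
          exact this.continuous
        exact this)
    · intro t ht
      exact ((hh t).differentiableAt).differentiableWithinAt
    · intro t ht
      rw [interior_Icc] at ht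
      rw [(hh t).deriv]
      have key : ⟪ψ' (x + t • v) - ψ' x, v⟫ ≤ t * (L * ‖v‖ ^ 2) := by
        calc ⟪ψ' (x + t • v) - ψ' x, v⟫ ≤ ‖ψ' (x + t • v) - ψ' x‖ * ‖v‖ :=
              real_inner_le_norm _ _
          _ ≤ (L * ‖x + t • v - x‖) * ‖v‖ := by
              gcongr; exact hlip _ _
          _ = t * (L * ‖v‖ ^ 2) := by
              rw [add_sub_cancel_left, norm_smul, Real.norm_eq_abs,
                abs_of_pos ht.1]
              ring
      have : ⟪ψ' (x + t • v), v⟫ - ⟪ψ' x, v⟫ = ⟪ψ' (x + t • v) - ψ' x, v⟫ := by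
        rw [inner_sub_left]
      rw [this]
      nlinarith [key]
  have h10 : h 1 ≤ h 0 := hanti (by norm_num) (by norm_num) (by norm_num)
  have h0 : h 0 = ψ x := by simp [h, φ]
  have h1 : h 1 = ψ y - ⟪ψ' x, v⟫ - L * ‖v‖ ^ 2 / 2 := by
    simp [h, φ, hv]
  rw [h0, h1] at h10
  linarith

/-- Retraction smoothness from Euclidean smoothness: if `ψ` has `L`-Lipschitz gradient,
`‖y - x‖ ≤ α‖u‖`, `‖y - x - u‖ ≤ β‖u‖²` and `‖∇ψ(x)‖ ≤ G`, then
`ψ(y) ≤ ψ(x) + ⟪∇ψ(x), u⟫ + ((α²L + 2Gβ)/2)‖u‖²`. -/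
theorem retraction_smoothness
    {E : Type*} [NormedAddCommGroup E] [InnerProductSpace ℝ E] [FiniteDimensional ℝ E]
    (L : ℝ) (ψ : E → ℝ) (ψ' : E → E)
    (hgrad : ∀ x : E, HasGradientAt ψ (ψ' x) x)
    (hlip : ∀ x₁ x₂ : E, ‖ψ' x₁ - ψ' x₂‖ ≤ L * ‖x₁ - x₂‖)
    (x y u : E) (α β G : ℝ) (hα : 0 ≤ α) (hβ : 0 ≤ β) (hG : 0 ≤ G)
    (h1 : ‖y - x‖ ≤ α * ‖u‖) (h2 : ‖y - x - u‖ ≤ β * ‖u‖ ^ 2)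
    (h3 : ‖ψ' x‖ ≤ G) :
    ψ y ≤ ψ x + ⟪ψ' x, u⟫ + ((α ^ 2 * L + 2 * G * β) / 2) * ‖u‖ ^ 2 := by
  by_cases hu : u = 0
  · have hy : y = x := by
      have : ‖y - x‖ ≤ 0 := by simpa [hu] using h1
      have := norm_nonneg (y - x)
      have : ‖y - x‖ = 0 := le_antisymm ‹_› ‹_›
      rwa [norm_eq_zero, sub_eq_zero] at this
    simp [hy, hu]
  · have hL : 0 ≤ L := by
      have := hlip (x + u) x
      have hnu : 0 < ‖u‖ := norm_pos_iff.mpr hu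
      have h0 : (0:ℝ) ≤ L * ‖u‖ := le_trans (norm_nonneg _) (by simpa using this)
      nlinarith
    have key := descent_aux L hL ψ ψ' hgrad hlip x y
    have split : ⟪ψ' x, y - x⟫ = ⟪ψ' x, u⟫ + ⟪ψ' x, y - x - u⟫ := by
      rw [← inner_add_right]; congr 1; abel
    have hb1 : ⟪ψ' x, y - x - u⟫ ≤ G * (β * ‖u‖ ^ 2) := by
      calc ⟪ψ' x, y - x - u⟫ ≤ ‖ψ' x‖ * ‖y - x - u‖ := real_inner_le_norm _ _
        _ ≤ G * (β * ‖u‖ ^ 2) := by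
            apply mul_le_mul h3 h2 (norm_nonneg _) hG
    have hb2 : L / 2 * ‖y - x‖ ^ 2 ≤ L / 2 * (α * ‖u‖) ^ 2 := by
      have : ‖y - x‖ ^ 2 ≤ (α * ‖u‖) ^ 2 := by
        apply pow_le_pow_left₀ (norm_nonneg _) h1
      nlinarith
    rw [split] at key
    nlinarith [key]
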